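/- Let A be a K×M real matrix, ε ~ N(0, σ² I_M), y ∈ ℝ^M fixed, and define L(x) = E[(‖A(x+ε)‖² − ‖Ay‖²)²]. Then L(x) = ‖Ax‖⁴ + 4σ²‖A^T A x‖² + 2‖Ax‖²(E[‖Aε‖²] − ‖Ay‖²) + L(0). -/

import Mathlib

open MeasureTheory Matrix

theorem stmt7 {K M : ℕ} (A : Matrix (Fin K) (Fin M) ℝ) (σ : ℝ) (hσ : 0 < σ)
    {Ω : Type*} [MeasurableSpace Ω] (μ : Measure Ω) [IsProbabilityMeasure μ]
    (ε : Ω → Fin M → ℝ)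
    (hmean : ∀ i, ∫ ω, ε ω i ∂μ = 0)
    (hcov : ∀ i j, ∫ ω, ε ω i * ε ω j ∂μ = if i = j then σ ^ 2 else 0)
    (hodd3 : ∀ i j k, ∫ ω, ε ω i * ε ω j * ε ω k ∂μ = 0)
    (hint1 : ∀ i, Integrable (fun ω => ε ω i) μ)
    (hint2 : ∀ i j, Integrable (fun ω => ε ω i * ε ω j) μ)
    (hint3 : ∀ i j k, Integrable (fun ω => ε ω i * ε ω j * ε ω k) μ)
    (hint4 : ∀ i j k l, Integrable (fun ω => ε ω i * ε ω j * ε ω k * ε ω l) μ)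
    (y : Fin M → ℝ) (L : (Fin M → ℝ) → ℝ)
    (hL : ∀ x, L x = ∫ ω,
      ((∑ k, (A.mulVec (x + ε ω) k) ^ 2) - ∑ k, (A.mulVec y k) ^ 2) ^ 2 ∂μ)
    (x : Fin M → ℝ) :
    L x = (∑ k, (A.mulVec x k) ^ 2) ^ 2
        + 4 * σ ^ 2 * ∑ i, ((Aᵀ * A).mulVec x i) ^ 2
        + 2 * (∑ k, (A.mulVec x k) ^ 2)
            * ((∫ ω, ∑ k, (A.mulVec (ε ω) k) ^ 2 ∂μ) - ∑ k, (A.mulVec y k) ^ 2)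
        + L 0 := by
  classical
  set w : Fin M → ℝ := (Aᵀ * A).mulVec x with hw
  set U : ℝ := ∑ k, (A.mulVec x k) ^ 2 with hU
  set c : ℝ := ∑ k, (A.mulVec y k) ^ 2 with hc
  set lin : Ω → ℝ := fun ω => ∑ j, w j * ε ω j with hlin
  set S : Ω → ℝ := fun ω => ∑ j, ∑ l, (∑ k, A k j * A k l) * (ε ω j * ε ω l) with hSdef
  -- pointwise identities
  have hSv : ∀ z : Fin M → ℝ,
      (∑ k, (A.mulVec z k) ^ 2) = ∑ j, ∑ l, (∑ k, A k j * A k l) * (z j * z l) := by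
    intro z
    have h1 : ∀ k, (A.mulVec z k) ^ 2 = ∑ j, ∑ l, (A k j * A k l) * (z j * z l) := by
      intro k
      rw [sq]
      simp only [mulVec, dotProduct]
      rw [Finset.sum_mul_sum]
      exact Finset.sum_congr rfl fun j _ => Finset.sum_congr rfl fun l _ => by ring
    simp only [h1]
    rw [Finset.sum_comm]
    refine Finset.sum_congr rfl fun j _ => ?_
    rw [Finset.sum_comm]
    refine Finset.sum_congr rfl fun l _ => ?_
    rw [Finset.sum_mul]
  have hcross : ∀ ω, (∑ k, A.mulVec x k * A.mulVec (ε ω) k) = lin ω := by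
    intro ω
    simp only [hlin, hw, mulVec, dotProduct, Matrix.mul_apply, Matrix.transpose_apply,
      Finset.sum_mul, Finset.mul_sum]
    rw [Finset.sum_comm]
    refine Finset.sum_congr rfl fun j _ => ?_
    rw [Finset.sum_comm]
    refine Finset.sum_congr rfl fun k _ => Finset.sum_congr rfl fun l _ => by ring
  have hmain : ∀ ω, (∑ k, (A.mulVec (x + ε ω) k) ^ 2) = U + 2 * lin ω + S ω := by
    intro ω
    have : ∀ k, (A.mulVec (x + ε ω) k) ^ 2
        = (A.mulVec x k) ^ 2 + 2 * (A.mulVec x k * A.mulVec (ε ω) k)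
          + (A.mulVec (ε ω) k) ^ 2 := by
      intro k
      rw [Matrix.mulVec_add]
      simp only [Pi.add_apply]
      ring
    simp only [this, Finset.sum_add_distrib, ← Finset.mul_sum, hcross]
    rw [hU, hSdef]
    simp only [hSv]
  -- integrability
  have hIlin : Integrable lin μ :=
    integrable_finset_sum _ fun j _ => (hint1 j).const_mul _
  have hIS : Integrable S μ :=
    integrable_finset_sum _ fun j _ => integrable_finset_sum _ fun l _ =>
      (hint2 j l).const_mul _
  have hlin2 : ∀ ω, lin ω ^ 2 = ∑ j, ∑ l, (w j * w l) * (ε ω j * ε ω l) := by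
    intro ω
    rw [sq, hlin]
    rw [Finset.sum_mul_sum]
    exact Finset.sum_congr rfl fun j _ => Finset.sum_congr rfl fun l _ => by ring
  have hIlin2 : Integrable (fun ω => lin ω ^ 2) μ := by
    simp only [hlin2]
    exact integrable_finset_sum _ fun j _ => integrable_finset_sum _ fun l _ =>
      (hint2 j l).const_mul _
  have hlinS : ∀ ω, lin ω * S ω
      = ∑ j, ∑ p, ∑ q, (w j * (∑ k, A k p * A k q)) * (ε ω j * ε ω p * ε ω q) := by
    intro ω
    rw [hlin, hSdef]
    rw [Finset.sum_mul_sum]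
    refine Finset.sum_congr rfl fun j _ => Finset.sum_congr rfl fun p _ => ?_
    rw [Finset.mul_sum]
    exact Finset.sum_congr rfl fun q _ => by ring
  have hIlinS : Integrable (fun ω => lin ω * S ω) μ := by
    simp only [hlinS]
    exact integrable_finset_sum _ fun j _ => integrable_finset_sum _ fun p _ =>
      integrable_finset_sum _ fun q _ => (hint3 j p q).const_mul _
  have hS2 : ∀ ω, S ω ^ 2 = ∑ j, ∑ p, ∑ l, ∑ q,
      ((∑ k, A k j * A k l) * (∑ k, A k p * A k q))
        * (ε ω j * ε ω l * ε ω p * ε ω q) := by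
    intro ω
    rw [sq, hSdef, Finset.sum_mul_sum]
    refine Finset.sum_congr rfl fun j _ => Finset.sum_congr rfl fun p _ => ?_
    rw [Finset.sum_mul_sum]
    exact Finset.sum_congr rfl fun l _ => Finset.sum_congr rfl fun q _ => by ring
  have hIS2 : Integrable (fun ω => S ω ^ 2) μ := by
    simp only [hS2]
    exact integrable_finset_sum _ fun j _ => integrable_finset_sum _ fun p _ =>
      integrable_finset_sum _ fun l _ => integrable_finset_sum _ fun q _ =>
        (hint4 j l p q).const_mul _
  have hISc2 : Integrable (fun ω => (S ω - c) ^ 2) μ := by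
    have h : (fun ω => (S ω - c) ^ 2)
        = fun ω => S ω ^ 2 - (2 * c) * S ω + c ^ 2 := funext fun ω => by ring
    rw [h]
    exact ((hIS2.sub (hIS.const_mul _)).add (integrable_const _))
  have hIlinSc : Integrable (fun ω => lin ω * (S ω - c)) μ := by
    have h : (fun ω => lin ω * (S ω - c)) = fun ω => lin ω * S ω - c * lin ω :=
      funext fun ω => by ring
    rw [h]
    exact hIlinS.sub (hIlin.const_mul _)
  -- integrals
  have hElin : ∫ ω, lin ω ∂μ = 0 := by
    rw [hlin, integral_finset_sum _ fun j _ => (hint1 j).const_mul _]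
    simp [integral_const_mul, hmean]
  have hElin2 : ∫ ω, lin ω ^ 2 ∂μ = σ ^ 2 * ∑ j, w j ^ 2 := by
    simp only [hlin2]
    rw [integral_finset_sum _ fun j _ => integrable_finset_sum _ fun l _ =>
      (hint2 j l).const_mul _]
    rw [Finset.mul_sum]
    refine Finset.sum_congr rfl fun j _ => ?_
    rw [integral_finset_sum _ fun l _ => (hint2 j l).const_mul _]
    simp only [integral_const_mul, hcov, mul_ite, mul_zero]
    rw [Finset.sum_ite_eq Finset.univ j fun l => w j * w l * σ ^ 2]
    simp only [Finset.mem_univ, if_true]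
    ring
  have hElinS : ∫ ω, lin ω * S ω ∂μ = 0 := by
    simp only [hlinS]
    rw [integral_finset_sum _ fun j _ => integrable_finset_sum _ fun p _ =>
      integrable_finset_sum _ fun q _ => (hint3 j p q).const_mul _]
    refine Finset.sum_eq_zero fun j _ => ?_
    rw [integral_finset_sum _ fun p _ => integrable_finset_sum _ fun q _ =>
      (hint3 j p q).const_mul _]
    refine Finset.sum_eq_zero fun p _ => ?_
    rw [integral_finset_sum _ fun q _ => (hint3 j p q).const_mul _]
    refine Finset.sum_eq_zero fun q _ => ?_
    rw [integral_const_mul, hodd3, mul_zero]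
  have hL0 : ∫ ω, (S ω - c) ^ 2 ∂μ = L 0 := by
    rw [hL 0]
    refine integral_congr_ae (Filter.Eventually.of_forall fun ω => ?_)
    simp only [zero_add, hSdef, hSv]
  have hES : ∫ ω, (∑ k, (A.mulVec (ε ω) k) ^ 2) ∂μ = ∫ ω, S ω ∂μ := by
    refine integral_congr_ae (Filter.Eventually.of_forall fun ω => ?_)
    simp only [hSdef, hSv]
  have hESc : ∫ ω, (S ω - c) ∂μ = (∫ ω, S ω ∂μ) - c := by
    rw [integral_sub hIS (integrable_const _), integral_const]
    simp
  have hElinSc : ∫ ω, lin ω * (S ω - c) ∂μ = 0 := by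
    have h : (fun ω => lin ω * (S ω - c)) = fun ω => lin ω * S ω - c * lin ω :=
      funext fun ω => by ring
    rw [h, integral_sub hIlinS (hIlin.const_mul _), integral_const_mul, hElin, hElinS]
    ring
  -- expand L x
  have hLx : L x = ∫ ω, ((U ^ 2 + 4 * U * lin ω + 2 * U * (S ω - c))
      + (4 * lin ω ^ 2 + 4 * (lin ω * (S ω - c)) + (S ω - c) ^ 2)) ∂μ := by
    rw [hL x]
    refine integral_congr_ae (Filter.Eventually.of_forall fun ω => ?_)
    simp only [hmain]
    ring
  have hIa : Integrable (fun ω => U ^ 2 + 4 * U * lin ω) μ :=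
    (integrable_const _).add (hIlin.const_mul _)
  have hIb : Integrable (fun ω => 2 * U * (S ω - c)) μ :=
    (hIS.sub (integrable_const _)).const_mul _
  have hI1 : Integrable (fun ω => U ^ 2 + 4 * U * lin ω + 2 * U * (S ω - c)) μ :=
    hIa.add hIb
  have hIc : Integrable (fun ω => 4 * lin ω ^ 2 + 4 * (lin ω * (S ω - c))) μ :=
    (hIlin2.const_mul _).add (hIlinSc.const_mul _)
  have hI2 : Integrable (fun ω => 4 * lin ω ^ 2 + 4 * (lin ω * (S ω - c)) + (S ω - c) ^ 2) μ :=
    hIc.add hISc2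
  have e1 : ∫ ω, (U ^ 2 + 4 * U * lin ω + 2 * U * (S ω - c)) ∂μ
      = U ^ 2 + 2 * U * ((∫ ω, S ω ∂μ) - c) := by
    rw [integral_add hIa hIb, integral_add (integrable_const _) (hIlin.const_mul _),
      integral_const_mul, integral_const_mul, hElin, hESc, integral_const]
    simp only [measure_univ, ENNReal.toReal_one, smul_eq_mul, one_mul, probReal_univ]
    ring
  have e2 : ∫ ω, (4 * lin ω ^ 2 + 4 * (lin ω * (S ω - c)) + (S ω - c) ^ 2) ∂μ
      = 4 * (σ ^ 2 * ∑ j, w j ^ 2) + L 0 := by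
    rw [integral_add hIc hISc2, integral_add (hIlin2.const_mul _) (hIlinSc.const_mul _),
      integral_const_mul, integral_const_mul, hElin2, hElinSc, hL0]
    ring
  rw [hLx, integral_add hI1 hI2, e1, e2, hES]
  have hw2 : ∑ i, ((Aᵀ * A).mulVec x i) ^ 2 = ∑ j, w j ^ 2 := by rw [hw]
  rw [hw2]
  ring
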